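/- arXiv:2602.18077 — 3 statements merged into one kernel-verified Lean document; each statement's English description precedes it below -/
import Mathlib

section
/- Fix channels h_1, …, h_K ∈ ℂ^M, hardware-impairment parameters m_t, m_r ∈ (0,1), noise powers σ_1², …, σ_K² > 0, and a power budget P_max > 0. Set the SIC imperfection coefficient δ_SIC = 1. Let U : ℝ^K → ℝ be monotonically nondecreasing in each coordinate. If (w_c⋆, w_1⋆, …, w_K⋆) maximizes U(γ_{p,1}, …, γ_{p,K}) over the feasible set F = {(w_c, w_1, …, w_K) ∈ (ℂ^M)^{K+1} : ‖w_c‖² + Σ_{k=1}^K ‖w_k‖² ≤ P_max}, then the point (0, w_1⋆, …, w_K⋆) obtained by replacing the common-stream beamformer with the zero vector also lies in F and is also a maximizer. In particular, there exists an optimal solution with common-stream beamformer equal to 0, i.e., the optimal RSMA structure degenerates into SDMA. -/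
open Matrix Finset

noncomputable section

/-- Outer product `w wᴴ`. -/
def outerProd {M : ℕ} (w : Fin M → ℂ) : Matrix (Fin M) (Fin M) ℂ :=
  Matrix.vecMulVec w (star w)

/-- `diag~(A)`: the diagonal matrix with the same diagonal as `A`. -/
def diagTilde {M : ℕ} (A : Matrix (Fin M) (Fin M) ℂ) : Matrix (Fin M) (Fin M) ℂ :=
  Matrix.diagonal (fun i => A i i)

/-- `Φ = hᴴ [m_r A + m_t(1+m_r) diag~(A)] h + (1+m_r) σ²` (real part). -/
def Phi {M : ℕ} (mr mt σ2 : ℝ) (h : Fin M → ℂ) (A : Matrix (Fin M) (Fin M) ℂ) : ℝ :=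
  (star h ⬝ᵥ (((mr : ℂ) • A + ((mt * (1 + mr) : ℝ) : ℂ) • diagTilde A)).mulVec h).re
    + (1 + mr) * σ2

/-- `A = w_c w_cᴴ + ∑ₖ w_k w_kᴴ`. -/
def Amat {M K : ℕ} (wc : Fin M → ℂ) (w : Fin K → Fin M → ℂ) : Matrix (Fin M) (Fin M) ℂ :=
  outerProd wc + ∑ k, outerProd (w k)

/-- Private-stream SINR of user `k` under SIC imperfection coefficient `δ`. -/
def sinr {M K : ℕ} (mr mt : ℝ) (σ2 : Fin K → ℝ) (h : Fin K → Fin M → ℂ) (δ : ℝ)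
    (wc : Fin M → ℂ) (w : Fin K → Fin M → ℂ) (k : Fin K) : ℝ :=
  ‖star (h k) ⬝ᵥ w k‖ ^ 2 /
    ((∑ i ∈ Finset.univ.erase k, ‖star (h k) ⬝ᵥ w i‖ ^ 2)
      + δ ^ 2 * ‖star (h k) ⬝ᵥ wc‖ ^ 2 + Phi mr mt (σ2 k) (h k) (Amat wc w))

/-- Power of a beamformer `‖w‖²`. -/
def pw {M : ℕ} (w : Fin M → ℂ) : ℝ := ∑ j, ‖w j‖ ^ 2

def qf {M : ℕ} (mr c : ℝ) (h : Fin M → ℂ) (A : Matrix (Fin M) (Fin M) ℂ) : ℝ :=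
  (star h ⬝ᵥ (((mr : ℂ) • A + ((c:ℝ) : ℂ) • diagTilde A)).mulVec h).re

lemma qf_add {M : ℕ} (mr c : ℝ) (h : Fin M → ℂ) (A B : Matrix (Fin M) (Fin M) ℂ) :
    qf mr c h (A + B) = qf mr c h A + qf mr c h B := by
  have : diagTilde (A + B) = diagTilde A + diagTilde B := by
    simp [diagTilde, Matrix.diagonal_add]
  simp [qf, this, smul_add, add_mulVec, dotProduct_add]
  ring

lemma qf_zero {M : ℕ} (mr c : ℝ) (h : Fin M → ℂ) : qf mr c h 0 = 0 := by
  simp [qf, diagTilde]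

lemma qf_sum {M : ℕ} {ι : Type*} [Fintype ι] (mr c : ℝ) (h : Fin M → ℂ)
    (A : ι → Matrix (Fin M) (Fin M) ℂ) :
    qf mr c h (∑ k, A k) = ∑ k, qf mr c h (A k) := by
  classical
  induction (Finset.univ : Finset ι) using Finset.induction with
  | empty => simp [qf_zero]
  | insert _ _ hx ih => rw [Finset.sum_insert hx, Finset.sum_insert hx, qf_add, ih]

lemma qf_outer_nonneg {M : ℕ} (mr c : ℝ) (hmr : 0 ≤ mr) (hc : 0 ≤ c) (h w : Fin M → ℂ) :
    0 ≤ qf mr c h (outerProd w) := by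
  have h1 : (outerProd w).mulVec h = fun i => w i * (star w ⬝ᵥ h) := by
    ext i
    simp [outerProd, mulVec, vecMulVec, dotProduct, Finset.mul_sum, mul_assoc]
  have h2 : star h ⬝ᵥ (outerProd w).mulVec h = (star h ⬝ᵥ w) * (star w ⬝ᵥ h) := by
    rw [h1]; simp [dotProduct, Finset.sum_mul, mul_assoc]
  have h3 : star w ⬝ᵥ h = starRingEnd ℂ (star h ⬝ᵥ w) := by
    simp [dotProduct, map_sum, mul_comm]
  have h4 : diagTilde (outerProd w) = Matrix.diagonal (fun i => w i * starRingEnd ℂ (w i)) := by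
    simp [diagTilde, outerProd, vecMulVec_apply]
  have h5 : star h ⬝ᵥ (diagTilde (outerProd w)).mulVec h
      = ∑ i, starRingEnd ℂ (h i) * (w i * starRingEnd ℂ (w i)) * h i := by
    rw [h4]
    simp only [mulVec_diagonal, dotProduct, Pi.star_apply, RCLike.star_def]
    exact Finset.sum_congr rfl fun i _ => by ring
  have key : qf mr c h (outerProd w)
      = mr * Complex.normSq (star h ⬝ᵥ w)
        + c * ∑ i, Complex.normSq (w i) * Complex.normSq (h i) := by
    simp only [qf, add_mulVec, dotProduct_add, smul_mulVec, dotProduct_smul, Complex.add_re,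
      smul_eq_mul]
    rw [h2, h3, Complex.mul_conj, h5]
    have h6 : (∑ i, starRingEnd ℂ (h i) * (w i * starRingEnd ℂ (w i)) * h i)
        = ((∑ i, Complex.normSq (w i) * Complex.normSq (h i) : ℝ) : ℂ) := by
      push_cast
      refine Finset.sum_congr rfl fun i _ => ?_
      rw [← Complex.mul_conj, ← Complex.mul_conj]
      push_cast; ring
    rw [h6]
    simp [Complex.ofReal_mul]
  rw [key]
  have h7 : 0 ≤ ∑ i, Complex.normSq (w i) * Complex.normSq (h i) :=
    Finset.sum_nonneg fun i _ => mul_nonneg (Complex.normSq_nonneg _) (Complex.normSq_nonneg _)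
  have h8 := Complex.normSq_nonneg (star h ⬝ᵥ w)
  positivity

/-- at δ_SIC = 1, replacing the common-stream beamformer of a maximizer by 0
stays feasible and is still a maximizer; in particular an optimal solution with
zero common-stream beamformer exists (RSMA degenerates into SDMA). -/
theorem stmt0 {M K : ℕ} (h : Fin K → Fin M → ℂ) (mt mr : ℝ)
    (hmt : mt ∈ Set.Ioo (0:ℝ) 1) (hmr : mr ∈ Set.Ioo (0:ℝ) 1)
    (σ2 : Fin K → ℝ) (hσ : ∀ k, 0 < σ2 k) (Pmax : ℝ) (hP : 0 < Pmax)
    (U : (Fin K → ℝ) → ℝ)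
    (hU : ∀ x y : Fin K → ℝ, (∀ k, x k ≤ y k) → U x ≤ U y)
    (wcs : Fin M → ℂ) (ws : Fin K → Fin M → ℂ)
    (hfeas : pw wcs + ∑ k, pw (ws k) ≤ Pmax)
    (hopt : ∀ (wc : Fin M → ℂ) (w : Fin K → Fin M → ℂ),
      pw wc + ∑ k, pw (w k) ≤ Pmax →
      U (fun k => sinr mr mt σ2 h 1 wc w k) ≤ U (fun k => sinr mr mt σ2 h 1 wcs ws k)) :
    (pw (0 : Fin M → ℂ) + ∑ k, pw (ws k) ≤ Pmax) ∧
    (∀ (wc : Fin M → ℂ) (w : Fin K → Fin M → ℂ),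
      pw wc + ∑ k, pw (w k) ≤ Pmax →
      U (fun k => sinr mr mt σ2 h 1 wc w k)
        ≤ U (fun k => sinr mr mt σ2 h 1 (0 : Fin M → ℂ) ws k)) := by
  obtain ⟨hmt0, hmt1⟩ := hmt
  obtain ⟨hmr0, hmr1⟩ := hmr
  have hc0 : 0 ≤ mt * (1 + mr) := by nlinarith
  have hpw0 : pw (0 : Fin M → ℂ) = 0 := by simp [pw]
  have hpwnn : 0 ≤ pw wcs := Finset.sum_nonneg fun j _ => by positivity
  have hfeas0 : pw (0 : Fin M → ℂ) + ∑ k, pw (ws k) ≤ Pmax := by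
    rw [hpw0]; linarith
  refine ⟨hfeas0, fun wc w hw => ?_⟩
  refine le_trans (hopt wc w hw) (hU _ _ fun k => ?_)
  -- sinr with wcs ≤ sinr with 0
  have hPhi : ∀ (wc' : Fin M → ℂ),
      Phi mr mt (σ2 k) (h k) (Amat wc' ws)
        = qf mr (mt * (1 + mr)) (h k) (outerProd wc')
          + (∑ i, qf mr (mt * (1 + mr)) (h k) (outerProd (ws i))) + (1 + mr) * σ2 k := by
    intro wc'
    have : Phi mr mt (σ2 k) (h k) (Amat wc' ws)
        = qf mr (mt * (1 + mr)) (h k) (Amat wc' ws) + (1 + mr) * σ2 k := rfl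
    rw [this, Amat, qf_add, qf_sum]
  have houter0 : outerProd (0 : Fin M → ℂ) = 0 := by
    ext i j; simp [outerProd, vecMulVec_apply]
  have hqsum : 0 ≤ ∑ i, qf mr (mt * (1 + mr)) (h k) (outerProd (ws i)) :=
    Finset.sum_nonneg fun i _ => qf_outer_nonneg _ _ hmr0.le hc0 _ _
  have hPhi0pos : 0 < Phi mr mt (σ2 k) (h k) (Amat 0 ws) := by
    rw [hPhi 0, houter0, qf_zero]
    have := hσ k
    nlinarith
  have hPhile : Phi mr mt (σ2 k) (h k) (Amat 0 ws) ≤ Phi mr mt (σ2 k) (h k) (Amat wcs ws) := by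
    rw [hPhi 0, hPhi wcs, houter0, qf_zero]
    have := qf_outer_nonneg mr (mt * (1 + mr)) hmr0.le hc0 (h k) wcs
    linarith
  have hSnn : 0 ≤ ∑ i ∈ Finset.univ.erase k, ‖star (h k) ⬝ᵥ ws i‖ ^ 2 :=
    Finset.sum_nonneg fun i _ => by positivity
  simp only [sinr]
  apply div_le_div_of_nonneg_left (by positivity)
  · have : ‖star (h k) ⬝ᵥ (0 : Fin M → ℂ)‖ ^ 2 = 0 := by simp
    nlinarith
  · have h1 : (0:ℝ) ≤ (1:ℝ)^2 * ‖star (h k) ⬝ᵥ wcs‖ ^ 2 := by positivity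
    have h2 : ‖star (h k) ⬝ᵥ (0 : Fin M → ℂ)‖ ^ 2 = 0 := by simp
    nlinarith
end
end

section
/- Fix channels h_1, …, h_K ∈ ℂ^M, parameters m_t, m_r ∈ (0,1), noise powers σ_1², …, σ_K² > 0, a power budget P_max > 0, and set δ_SIC = 1. Let U : ℝ^K → ℝ be strictly increasing in each coordinate (i.e., if x ≤ y componentwise with x_k < y_k for some k, then U(x) < U(y)). If (w_c⋆, w_1⋆, …, w_K⋆) maximizes U(γ_{p,1}, …, γ_{p,K}) over the feasible set F = {(w_c, w_1, …, w_K) : ‖w_c‖² + Σ_{k=1}^K ‖w_k‖² ≤ P_max}, then for every user k, either h_kᴴ w_c⋆ = 0 or h_kᴴ w_k⋆ = 0. Consequently, if moreover h_kᴴ w_k⋆ ≠ 0 for all k and the intersection of the nullspaces of the linear functionals w ↦ h_kᴴ w (k = 1, …, K) is {0}, then w_c⋆ = 0. -/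
open Matrix Finset

noncomputable section

/-! ### Auxiliary lemmas -/

lemma norm_sq_eq_normSq (z : ℂ) : ‖z‖^2 = Complex.normSq z := by
  rw [Complex.sq_norm]

lemma mul_star_self' (u : ℂ) : u * star u = (Complex.normSq u : ℂ) := Complex.mul_conj u

lemma star_mul_self' (u : ℂ) : star u * u = (Complex.normSq u : ℂ) := by
  rw [mul_comm]; exact mul_star_self' u

lemma unit2 (a b c x y x' y' : ℂ)
    (hc : (Complex.normSq c : ℂ) * ((Complex.normSq a + Complex.normSq b : ℝ) : ℂ) = 1) :
    (c*b*x + (-(c*a))*y) * star (c*b*x' + (-(c*a))*y')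
      + (c*star a*x + c*star b*y) * star (c*star a*x' + c*star b*y')
    = x * star x' + y * star y' := by
  have hS : ((Complex.normSq a + Complex.normSq b : ℝ) : ℂ) = a * star a + b * star b := by
    push_cast
    rw [mul_star_self', mul_star_self']
  have key : (c*b*x + (-(c*a))*y) * star (c*b*x' + (-(c*a))*y')
      + (c*star a*x + c*star b*y) * star (c*star a*x' + c*star b*y')
      = ((Complex.normSq c : ℂ) * ((Complex.normSq a + Complex.normSq b : ℝ) : ℂ))
          * (x * star x' + y * star y') := by
    rw [hS, ← mul_star_self' c]
    simp only [star_add, star_mul', star_neg, star_star]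
    ring
  rw [key, hc, one_mul]

lemma unit2_norm (a b c x y : ℂ)
    (hc : (Complex.normSq c : ℂ) * ((Complex.normSq a + Complex.normSq b : ℝ) : ℂ) = 1) :
    ‖c*b*x + (-(c*a))*y‖^2 + ‖c*star a*x + c*star b*y‖^2 = ‖x‖^2 + ‖y‖^2 := by
  have h := unit2 a b c x y x y hc
  rw [mul_star_self', mul_star_self', mul_star_self', mul_star_self'] at h
  simp only [norm_sq_eq_normSq]
  exact_mod_cast h

lemma dot_lin {M : ℕ} (g u v : Fin M → ℂ) (α β : ℂ) :
    g ⬝ᵥ (fun j => α * u j + β * v j) = α * (g ⬝ᵥ u) + β * (g ⬝ᵥ v) := by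
  simp only [dotProduct, Finset.mul_sum, ← Finset.sum_add_distrib]
  exact Finset.sum_congr rfl fun j _ => by ring

lemma sum_mulVec' {M K : ℕ} (f : Fin K → Matrix (Fin M) (Fin M) ℂ) (g : Fin M → ℂ) :
    (∑ k, f k) *ᵥ g = ∑ k, f k *ᵥ g := by
  funext i
  simp only [Matrix.mulVec, dotProduct, Matrix.sum_apply, Finset.sum_mul, Finset.sum_apply]
  rw [Finset.sum_comm]

lemma dot_sum' {M K : ℕ} (g : Fin M → ℂ) (v : Fin K → Fin M → ℂ) :
    g ⬝ᵥ (∑ k, v k) = ∑ k, g ⬝ᵥ v k := by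
  simp only [dotProduct, Finset.sum_apply, Finset.mul_sum]
  rw [Finset.sum_comm]

lemma outer_quad {M : ℕ} (g w : Fin M → ℂ) :
    star g ⬝ᵥ (outerProd w).mulVec g = (Complex.normSq (star g ⬝ᵥ w) : ℂ) := by
  have h1 : (outerProd w).mulVec g = fun i => w i * (star w ⬝ᵥ g) := by
    funext i
    simp only [outerProd, Matrix.mulVec, dotProduct, Matrix.vecMulVec_apply, Pi.star_apply,
      Finset.mul_sum]
    exact Finset.sum_congr rfl fun j _ => by ring
  rw [h1]
  have h2 : star g ⬝ᵥ (fun i => w i * (star w ⬝ᵥ g)) = (star g ⬝ᵥ w) * (star w ⬝ᵥ g) := by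
    simp only [dotProduct, Finset.sum_mul]
    exact Finset.sum_congr rfl fun j _ => by ring
  rw [h2]
  have h3 : star w ⬝ᵥ g = star (star g ⬝ᵥ w) := by
    simp only [dotProduct, star_sum, star_mul', star_star, Pi.star_apply]
    exact Finset.sum_congr rfl fun j _ => by ring
  rw [h3, mul_star_self']

lemma Amat_diag {M K : ℕ} (wc : Fin M → ℂ) (w : Fin K → Fin M → ℂ) (i : Fin M) :
    Amat wc w i i = ((Complex.normSq (wc i) + ∑ k, Complex.normSq (w k i) : ℝ) : ℂ) := by
  simp only [Amat, Matrix.add_apply, Matrix.sum_apply, outerProd, Matrix.vecMulVec_apply,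
    Pi.star_apply, mul_star_self']
  push_cast
  ring

lemma Phi_pos {M K : ℕ} (mr mt σ2 : ℝ) (hmr : 0 < mr) (hmt : 0 < mt) (hσ : 0 < σ2)
    (g : Fin M → ℂ) (wc : Fin M → ℂ) (w : Fin K → Fin M → ℂ) :
    0 < Phi mr mt σ2 g (Amat wc w) := by
  have hquad : 0 ≤ (star g ⬝ᵥ (Amat wc w).mulVec g).re := by
    have e : star g ⬝ᵥ (Amat wc w).mulVec g
        = (Complex.normSq (star g ⬝ᵥ wc) : ℂ) + ∑ k, (Complex.normSq (star g ⬝ᵥ w k) : ℂ) := by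
      rw [Amat, Matrix.add_mulVec, dotProduct_add, outer_quad, sum_mulVec', dot_sum']
      congr 1
      exact Finset.sum_congr rfl fun k _ => outer_quad g (w k)
    rw [e]
    rw [Complex.add_re, Complex.re_sum]
    simp only [Complex.ofReal_re]
    exact add_nonneg (Complex.normSq_nonneg _)
      (Finset.sum_nonneg fun k _ => Complex.normSq_nonneg _)
  have hdiag : 0 ≤ (star g ⬝ᵥ (diagTilde (Amat wc w)).mulVec g).re := by
    have e : star g ⬝ᵥ (diagTilde (Amat wc w)).mulVec g
        = ∑ i, (((Complex.normSq (wc i) + ∑ k, Complex.normSq (w k i))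
            * Complex.normSq (g i) : ℝ) : ℂ) := by
      simp only [diagTilde, dotProduct, Matrix.mulVec_diagonal, Pi.star_apply]
      refine Finset.sum_congr rfl fun i _ => ?_
      rw [Amat_diag]
      push_cast
      rw [← star_mul_self' (g i)]
      ring
    rw [e, Complex.re_sum]
    simp only [Complex.ofReal_re]
    refine Finset.sum_nonneg fun i _ => ?_
    exact mul_nonneg (add_nonneg (Complex.normSq_nonneg _)
      (Finset.sum_nonneg fun k _ => Complex.normSq_nonneg _)) (Complex.normSq_nonneg _)
  have hrw : (star g ⬝ᵥ (((mr : ℂ) • (Amat wc w)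
        + ((mt * (1 + mr) : ℝ) : ℂ) • diagTilde (Amat wc w))).mulVec g).re
      = mr * (star g ⬝ᵥ (Amat wc w).mulVec g).re
        + (mt * (1 + mr)) * (star g ⬝ᵥ (diagTilde (Amat wc w)).mulVec g).re := by
    rw [Matrix.add_mulVec, dotProduct_add, Matrix.smul_mulVec, Matrix.smul_mulVec,
      dotProduct_smul, dotProduct_smul]
    simp [Complex.add_re, Complex.re_ofReal_mul, smul_eq_mul]
  unfold Phi
  rw [hrw]
  have h1 : 0 ≤ mt * (1 + mr) := by positivity
  nlinarith [mul_nonneg hmr.le hquad, mul_nonneg h1 hdiag,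
    mul_pos (by linarith : (0:ℝ) < 1 + mr) hσ]

/-- at δ_SIC = 1, with a strictly increasing utility, any maximizer satisfies
h_kᴴ w_c⋆ = 0 or h_kᴴ w_k⋆ = 0 for every k; if moreover h_kᴴ w_k⋆ ≠ 0 for all k and the
channels' common nullspace is trivial, then w_c⋆ = 0. -/
theorem stmt3 {M K : ℕ} (h : Fin K → Fin M → ℂ) (mt mr : ℝ)
    (hmt : mt ∈ Set.Ioo (0:ℝ) 1) (hmr : mr ∈ Set.Ioo (0:ℝ) 1)
    (σ2 : Fin K → ℝ) (hσ : ∀ k, 0 < σ2 k) (Pmax : ℝ) (hP : 0 < Pmax)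
    (U : (Fin K → ℝ) → ℝ)
    (hU : ∀ x y : Fin K → ℝ, (∀ k, x k ≤ y k) → (∃ k, x k < y k) → U x < U y)
    (wcs : Fin M → ℂ) (ws : Fin K → Fin M → ℂ)
    (hfeas : pw wcs + ∑ k, pw (ws k) ≤ Pmax)
    (hopt : ∀ (wc : Fin M → ℂ) (w : Fin K → Fin M → ℂ),
      pw wc + ∑ k, pw (w k) ≤ Pmax →
      U (fun k => sinr mr mt σ2 h 1 wc w k) ≤ U (fun k => sinr mr mt σ2 h 1 wcs ws k)) :
    (∀ k, star (h k) ⬝ᵥ wcs = 0 ∨ star (h k) ⬝ᵥ ws k = 0) ∧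
    ((∀ k, star (h k) ⬝ᵥ ws k ≠ 0) →
      (∀ v : Fin M → ℂ, (∀ k, star (h k) ⬝ᵥ v = 0) → v = 0) →
      wcs = 0) := by
  have main : ∀ k, star (h k) ⬝ᵥ wcs = 0 ∨ star (h k) ⬝ᵥ ws k = 0 := by
    intro k₀
    by_contra hcon
    push_neg at hcon
    obtain ⟨ha, hb⟩ := hcon
    set a : ℂ := star (h k₀) ⬝ᵥ wcs with ha_def
    set b : ℂ := star (h k₀) ⬝ᵥ ws k₀ with hb_def
    set S : ℝ := Complex.normSq a + Complex.normSq b with hS_def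
    have hSpos : 0 < S := add_pos (Complex.normSq_pos.2 ha) (Complex.normSq_pos.2 hb)
    set c : ℂ := (((Real.sqrt S)⁻¹ : ℝ) : ℂ) with hc_def
    have hnc : Complex.normSq c = S⁻¹ := by
      rw [hc_def, Complex.normSq_ofReal, ← mul_inv, Real.mul_self_sqrt hSpos.le]
    have hcS : (Complex.normSq c : ℂ) * ((Complex.normSq a + Complex.normSq b : ℝ) : ℂ) = 1 := by
      rw [hnc, ← hS_def, ← Complex.ofReal_mul, inv_mul_cancel₀ hSpos.ne', Complex.ofReal_one]
    set wc' : Fin M → ℂ := fun j => c*b*(wcs j) + (-(c*a))*(ws k₀ j) with hwc'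
    set wk' : Fin M → ℂ := fun j => c*(star a)*(wcs j) + c*(star b)*(ws k₀ j) with hwk'
    set w' : Fin K → Fin M → ℂ := Function.update ws k₀ wk' with hw'
    -- dot products with the new beamformers
    have dco : ∀ g : Fin M → ℂ, star g ⬝ᵥ wc'
        = c*b*(star g ⬝ᵥ wcs) + (-(c*a))*(star g ⬝ᵥ ws k₀) := by
      intro g; rw [hwc']; exact dot_lin (star g) wcs (ws k₀) _ _
    have dko : ∀ g : Fin M → ℂ, star g ⬝ᵥ wk'
        = c*(star a)*(star g ⬝ᵥ wcs) + c*(star b)*(star g ⬝ᵥ ws k₀) := by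
      intro g; rw [hwk']; exact dot_lin (star g) wcs (ws k₀) _ _
    have key_norm : ∀ g : Fin M → ℂ,
        ‖star g ⬝ᵥ wc'‖^2 + ‖star g ⬝ᵥ wk'‖^2
          = ‖star g ⬝ᵥ wcs‖^2 + ‖star g ⬝ᵥ ws k₀‖^2 := by
      intro g
      rw [dco g, dko g]
      exact unit2_norm a b c _ _ hcS
    have dck0 : star (h k₀) ⬝ᵥ wc' = 0 := by
      rw [dco (h k₀), ← ha_def, ← hb_def]; ring
    have dkk0 : star (h k₀) ⬝ᵥ wk' = c * (S : ℂ) := by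
      rw [dko (h k₀), ← ha_def, ← hb_def, hS_def]
      push_cast
      rw [← star_mul_self' a, ← star_mul_self' b]
      ring
    have hnk0 : ‖star (h k₀) ⬝ᵥ wk'‖^2 = S := by
      rw [dkk0, norm_sq_eq_normSq, Complex.normSq_mul, hnc, Complex.normSq_ofReal]
      field_simp
    -- feasibility of the new point
    have hpw1 : pw wc' + pw wk' = pw wcs + pw (ws k₀) := by
      simp only [pw]
      rw [← Finset.sum_add_distrib, ← Finset.sum_add_distrib]
      refine Finset.sum_congr rfl fun j _ => ?_
      rw [hwc', hwk']
      exact unit2_norm a b c (wcs j) (ws k₀ j) hcS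
    have hfeas' : pw wc' + ∑ k, pw (w' k) ≤ Pmax := by
      have h2 : ∑ k, pw (w' k) = pw wk' + ∑ k ∈ univ.erase k₀, pw (ws k) := by
        rw [← Finset.add_sum_erase _ _ (Finset.mem_univ k₀)]
        congr 1
        · rw [hw', Function.update_self]
        · exact Finset.sum_congr rfl fun k hk => by
            rw [hw', Function.update_of_ne (Finset.ne_of_mem_erase hk)]
      have h3 : ∑ k, pw (ws k) = pw (ws k₀) + ∑ k ∈ univ.erase k₀, pw (ws k) :=
        (Finset.add_sum_erase _ _ (Finset.mem_univ k₀)).symm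
      rw [h2]
      rw [h3] at hfeas
      linarith
    -- the Gram matrix is unchanged
    have hA : Amat wc' w' = Amat wcs ws := by
      have hout : ∀ i j : Fin M, outerProd wc' i j + outerProd wk' i j
          = outerProd wcs i j + outerProd (ws k₀) i j := by
        intro i j
        simp only [outerProd, Matrix.vecMulVec_apply, Pi.star_apply, hwc', hwk']
        exact unit2 a b c (wcs i) (ws k₀ i) (wcs j) (ws k₀ j) hcS
      ext i j
      simp only [Amat, Matrix.add_apply, Matrix.sum_apply]
      rw [← Finset.add_sum_erase _ (fun k => outerProd (w' k) i j) (Finset.mem_univ k₀),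
          ← Finset.add_sum_erase _ (fun k => outerProd (ws k) i j) (Finset.mem_univ k₀)]
      have hrest : ∑ k ∈ univ.erase k₀, outerProd (w' k) i j
          = ∑ k ∈ univ.erase k₀, outerProd (ws k) i j :=
        Finset.sum_congr rfl fun k hk => by
          rw [hw', Function.update_of_ne (Finset.ne_of_mem_erase hk)]
      rw [hrest, hw', Function.update_self]
      linear_combination hout i j
    -- SINRs of other users are unchanged
    have hsame : ∀ i, i ≠ k₀ → sinr mr mt σ2 h 1 wc' w' i = sinr mr mt σ2 h 1 wcs ws i := by
      intro i hi
      have hnum : star (h i) ⬝ᵥ w' i = star (h i) ⬝ᵥ ws i := by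
        rw [hw', Function.update_of_ne hi]
      have hk0mem : k₀ ∈ univ.erase i := Finset.mem_erase.2 ⟨Ne.symm hi, Finset.mem_univ _⟩
      have hsum : (∑ j ∈ univ.erase i, ‖star (h i) ⬝ᵥ w' j‖^2)
            + (1:ℝ)^2 * ‖star (h i) ⬝ᵥ wc'‖^2
          = (∑ j ∈ univ.erase i, ‖star (h i) ⬝ᵥ ws j‖^2)
            + (1:ℝ)^2 * ‖star (h i) ⬝ᵥ wcs‖^2 := by
        rw [← Finset.add_sum_erase _ (fun j => ‖star (h i) ⬝ᵥ w' j‖^2) hk0mem,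
            ← Finset.add_sum_erase _ (fun j => ‖star (h i) ⬝ᵥ ws j‖^2) hk0mem]
        have hrest : ∑ j ∈ (univ.erase i).erase k₀, ‖star (h i) ⬝ᵥ w' j‖^2
            = ∑ j ∈ (univ.erase i).erase k₀, ‖star (h i) ⬝ᵥ ws j‖^2 :=
          Finset.sum_congr rfl fun j hj => by
            rw [hw', Function.update_of_ne (Finset.ne_of_mem_erase hj)]
        rw [hrest, hw', Function.update_self]
        have hkey := key_norm (h i)
        simp only [one_pow, one_mul]
        linarith
      simp only [sinr]
      rw [hnum, hA]
      congr 1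
      linarith [hsum]
    -- SINR of user k₀ strictly increases
    have hΦ : 0 < Phi mr mt (σ2 k₀) (h k₀) (Amat wcs ws) :=
      Phi_pos mr mt (σ2 k₀) hmr.1 hmt.1 (hσ k₀) (h k₀) wcs ws
    have hlt : sinr mr mt σ2 h 1 wcs ws k₀ < sinr mr mt σ2 h 1 wc' w' k₀ := by
      simp only [sinr]
      rw [hA]
      have hRsum : ∑ j ∈ univ.erase k₀, ‖star (h k₀) ⬝ᵥ w' j‖^2
          = ∑ j ∈ univ.erase k₀, ‖star (h k₀) ⬝ᵥ ws j‖^2 :=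
        Finset.sum_congr rfl fun j hj => by
          rw [hw', Function.update_of_ne (Finset.ne_of_mem_erase hj)]
      have hnum' : star (h k₀) ⬝ᵥ w' k₀ = star (h k₀) ⬝ᵥ wk' := by
        rw [hw', Function.update_self]
      rw [hRsum, hnum', hnk0, dck0]
      have hR : (0:ℝ) ≤ ∑ j ∈ univ.erase k₀, ‖star (h k₀) ⬝ᵥ ws j‖^2 :=
        Finset.sum_nonneg fun j _ => by positivity
      set R := ∑ j ∈ univ.erase k₀, ‖star (h k₀) ⬝ᵥ ws j‖^2
      set Φ := Phi mr mt (σ2 k₀) (h k₀) (Amat wcs ws)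
      have hnb : ‖b‖^2 < S := by
        rw [norm_sq_eq_normSq, hS_def]
        have : 0 < Complex.normSq a := Complex.normSq_pos.2 ha
        linarith
      have hna : 0 < ‖a‖^2 := pow_pos (norm_pos_iff.2 ha) 2
      simp only [norm_zero, one_pow, one_mul]
      have hd2 : 0 < R + 0^2 + Φ := by nlinarith
      calc ‖b‖^2 / (R + ‖a‖^2 + Φ) ≤ ‖b‖^2 / (R + 0^2 + Φ) := by
            apply div_le_div_of_nonneg_left (by positivity) hd2
            nlinarith
        _ < S / (R + 0^2 + Φ) := (div_lt_div_iff_of_pos_right hd2).2 hnb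
    -- assemble the contradiction
    have hxle : ∀ k, sinr mr mt σ2 h 1 wcs ws k ≤ sinr mr mt σ2 h 1 wc' w' k := by
      intro k
      by_cases hk : k = k₀
      · subst hk; exact hlt.le
      · exact (hsame k hk).symm.le
    have hUlt : U (fun k => sinr mr mt σ2 h 1 wcs ws k)
        < U (fun k => sinr mr mt σ2 h 1 wc' w' k) := hU _ _ hxle ⟨k₀, hlt⟩
    have := hopt wc' w' hfeas'
    linarith
  refine ⟨main, fun hne hnull => hnull wcs fun k => (main k).resolve_right (hne k)⟩
end
end

section
/- Fix channels h_1, …, h_K ∈ ℂ^M, parameters m_t, m_r ∈ (0,1), noise powers σ_1², …, σ_K² > 0, a power budget P_max > 0, and set δ_SIC = 1. Let U : ℝ^K → ℝ be monotonically nondecreasing in each coordinate. Then the supremum of U(γ_{p,1}, …, γ_{p,K}) over the RSMA feasible set F = {(w_c, w_1, …, w_K) : ‖w_c‖² + Σ_{k=1}^K ‖w_k‖² ≤ P_max} equals the supremum of the same objective over the SDMA feasible subset F₀ = {(w_c, w_1, …, w_K) ∈ F : w_c = 0}. In other words, at fully ineffective SIC the optimal value achievable by RSMA coincides with that achievable by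 SDMA. -/
open Matrix Finset

noncomputable section

/-- real quadratic form -/
def qre {M : ℕ} (h : Fin M → ℂ) (A : Matrix (Fin M) (Fin M) ℂ) : ℝ :=
  (star h ⬝ᵥ A.mulVec h).re

lemma qre_add {M : ℕ} (h : Fin M → ℂ) (A B : Matrix (Fin M) (Fin M) ℂ) :
    qre h (A + B) = qre h A + qre h B := by
  simp [qre, Matrix.add_mulVec, dotProduct_add]

lemma qre_zero {M : ℕ} (h : Fin M → ℂ) : qre h 0 = 0 := by
  simp [qre]

lemma qre_sum {M K : ℕ} (h : Fin M → ℂ) (f : Fin K → Matrix (Fin M) (Fin M) ℂ) :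
    qre h (∑ k, f k) = ∑ k, qre h (f k) := by
  classical
  induction (Finset.univ : Finset (Fin K)) using Finset.induction with
  | empty => simp [qre_zero]
  | insert _ _ hni ih => simp [Finset.sum_insert hni, qre_add, ih]

lemma qre_out {M : ℕ} (h w : Fin M → ℂ) :
    qre h (outerProd w) = ‖star h ⬝ᵥ w‖ ^ 2 := by
  have e : star h ⬝ᵥ (outerProd w).mulVec h = (star h ⬝ᵥ w) * (star w ⬝ᵥ h) := by
    simp [outerProd, Matrix.mulVec, Matrix.vecMulVec, dotProduct, Finset.mul_sum,
      Finset.sum_mul, mul_assoc, mul_comm, mul_left_comm]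
  have e2 : star w ⬝ᵥ h = (starRingEnd ℂ) (star h ⬝ᵥ w) := by
    simp [dotProduct, map_sum, mul_comm]
  rw [qre, e, e2, Complex.mul_conj']
  norm_cast

lemma qre_diag_out {M : ℕ} (h w : Fin M → ℂ) :
    qre h (diagTilde (outerProd w)) = ∑ i, ‖w i‖ ^ 2 * ‖h i‖ ^ 2 := by
  simp [qre, diagTilde, outerProd, Matrix.mulVec_diagonal, dotProduct, Matrix.vecMulVec,
    Complex.norm_def, Complex.normSq_apply]
  apply Finset.sum_congr rfl
  intro i _
  rw [Real.sq_sqrt (by nlinarith [sq_nonneg (w i).re, sq_nonneg (w i).im]),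
    Real.sq_sqrt (by nlinarith [sq_nonneg (h i).re, sq_nonneg (h i).im])]
  ring

lemma diagTilde_add {M : ℕ} (A B : Matrix (Fin M) (Fin M) ℂ) :
    diagTilde (A + B) = diagTilde A + diagTilde B := by
  simp [diagTilde, ← Matrix.diagonal_add]

lemma diagTilde_zero {M : ℕ} : diagTilde (0 : Matrix (Fin M) (Fin M) ℂ) = 0 := by
  simp [diagTilde]

lemma diagTilde_sum {M K : ℕ} (f : Fin K → Matrix (Fin M) (Fin M) ℂ) :
    diagTilde (∑ k, f k) = ∑ k, diagTilde (f k) := by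
  classical
  induction (Finset.univ : Finset (Fin K)) using Finset.induction with
  | empty => simp [diagTilde_zero]
  | insert _ _ hni ih => simp [Finset.sum_insert hni, diagTilde_add, ih]

lemma Phi_eq {M : ℕ} (mr mt σ2 : ℝ) (h : Fin M → ℂ) (A : Matrix (Fin M) (Fin M) ℂ) :
    Phi mr mt σ2 h A = mr * qre h A + (mt * (1 + mr)) * qre h (diagTilde A) + (1 + mr) * σ2 := by
  simp [Phi, qre, Matrix.add_mulVec, dotProduct_add, Matrix.smul_mulVec,
    dotProduct_smul, smul_eq_mul, Complex.re_ofReal_mul]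

lemma Phi_Amat {M K : ℕ} (mr mt σ2 : ℝ) (hk wc : Fin M → ℂ) (w : Fin K → Fin M → ℂ) :
    Phi mr mt σ2 hk (Amat wc w) =
      mr * (‖star hk ⬝ᵥ wc‖ ^ 2 + ∑ k, ‖star hk ⬝ᵥ w k‖ ^ 2)
      + (mt * (1 + mr)) * ((∑ i, ‖wc i‖ ^ 2 * ‖hk i‖ ^ 2)
          + ∑ k, ∑ i, ‖w k i‖ ^ 2 * ‖hk i‖ ^ 2)
      + (1 + mr) * σ2 := by
  rw [Phi_eq, Amat, qre_add, qre_sum, diagTilde_add, diagTilde_sum, qre_add, qre_sum]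
  simp [qre_out, qre_diag_out]

set_option maxHeartbeats 1000000 in
lemma sinr_le {M K : ℕ} (h : Fin K → Fin M → ℂ) (mt mr : ℝ)
    (hmt : 0 < mt) (hmr : 0 < mr) (σ2 : Fin K → ℝ) (hσ : ∀ k, 0 < σ2 k)
    (wc : Fin M → ℂ) (w : Fin K → Fin M → ℂ) (k : Fin K) :
    sinr mr mt σ2 h 1 wc w k ≤ sinr mr mt σ2 h 1 0 w k := by
  unfold sinr
  have hS : (0:ℝ) ≤ ∑ i ∈ Finset.univ.erase k, ‖star (h k) ⬝ᵥ w i‖ ^ 2 :=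
    Finset.sum_nonneg fun i _ => by positivity
  have hq1 : (0:ℝ) ≤ ∑ j, ‖star (h k) ⬝ᵥ w j‖ ^ 2 :=
    Finset.sum_nonneg fun i _ => by positivity
  have hq2 : (0:ℝ) ≤ ∑ j, ∑ i, ‖w j i‖ ^ 2 * ‖h k i‖ ^ 2 :=
    Finset.sum_nonneg fun j _ => Finset.sum_nonneg fun i _ => by positivity
  have hΦ0 : (0:ℝ) < Phi mr mt (σ2 k) (h k) (Amat 0 w) := by
    rw [Phi_Amat]
    simp only [dotProduct_zero, Pi.zero_apply, norm_zero]
    have := hσ k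
    have e1 : (0:ℝ) ≤ mr * ((0:ℝ)^2 + ∑ j, ‖star (h k) ⬝ᵥ w j‖ ^ 2) :=
      mul_nonneg hmr.le (by norm_num; exact hq1)
    have e2 : (0:ℝ) ≤ mt * (1 + mr) * ((∑ i, (0:ℝ)^2 * ‖h k i‖ ^ 2)
        + ∑ j, ∑ i, ‖w j i‖ ^ 2 * ‖h k i‖ ^ 2) := by
      refine mul_nonneg (mul_nonneg hmt.le (by linarith)) ?_
      have : (∑ i, ((0:ℝ))^2 * ‖h k i‖ ^ 2) = 0 := by simp
      linarith
    have e5 : (0:ℝ) < (1 + mr) * σ2 k := mul_pos (by linarith) this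
    linarith
  have hΦle : Phi mr mt (σ2 k) (h k) (Amat 0 w) ≤ Phi mr mt (σ2 k) (h k) (Amat wc w) := by
    rw [Phi_Amat, Phi_Amat]
    simp only [dotProduct_zero, Pi.zero_apply, norm_zero]
    have h1 : (0:ℝ) ≤ ‖star (h k) ⬝ᵥ wc‖ ^ 2 := by positivity
    have h2 : (0:ℝ) ≤ ∑ i, ‖wc i‖ ^ 2 * ‖h k i‖ ^ 2 :=
      Finset.sum_nonneg fun i _ => by positivity
    have e3 : (∑ i, ((0:ℝ))^2 * ‖h k i‖ ^ 2) = 0 := by simp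
    gcongr <;> first | positivity | linarith
  have hd0 : (0:ℝ) < (∑ i ∈ Finset.univ.erase k, ‖star (h k) ⬝ᵥ w i‖ ^ 2)
      + (1:ℝ) ^ 2 * ‖star (h k) ⬝ᵥ (0 : Fin M → ℂ)‖ ^ 2
      + Phi mr mt (σ2 k) (h k) (Amat 0 w) := by
    have h2 : ‖star (h k) ⬝ᵥ (0 : Fin M → ℂ)‖ = 0 := by simp
    rw [h2]
    linarith
  have hdle : (∑ i ∈ Finset.univ.erase k, ‖star (h k) ⬝ᵥ w i‖ ^ 2)
      + (1:ℝ) ^ 2 * ‖star (h k) ⬝ᵥ (0 : Fin M → ℂ)‖ ^ 2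
      + Phi mr mt (σ2 k) (h k) (Amat 0 w)
      ≤ (∑ i ∈ Finset.univ.erase k, ‖star (h k) ⬝ᵥ w i‖ ^ 2)
      + (1:ℝ) ^ 2 * ‖star (h k) ⬝ᵥ wc‖ ^ 2
      + Phi mr mt (σ2 k) (h k) (Amat wc w) := by
    have h1 : (0:ℝ) ≤ ‖star (h k) ⬝ᵥ wc‖ ^ 2 := by positivity
    have h2 : ‖star (h k) ⬝ᵥ (0 : Fin M → ℂ)‖ = 0 := by simp
    rw [h2]
    linarith
  exact div_le_div_of_nonneg_left (by positivity) hd0 hdle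

/-- at δ_SIC = 1, the supremum of any nondecreasing utility of the SINRs over
the RSMA feasible set equals the supremum over the SDMA subset {w_c = 0}. -/
theorem stmt7 {M K : ℕ} (h : Fin K → Fin M → ℂ) (mt mr : ℝ)
    (hmt : mt ∈ Set.Ioo (0:ℝ) 1) (hmr : mr ∈ Set.Ioo (0:ℝ) 1)
    (σ2 : Fin K → ℝ) (hσ : ∀ k, 0 < σ2 k) (Pmax : ℝ) (hP : 0 < Pmax)
    (U : (Fin K → ℝ) → ℝ)
    (hU : ∀ x y : Fin K → ℝ, (∀ k, x k ≤ y k) → U x ≤ U y) :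
    sSup ((fun p : (Fin M → ℂ) × (Fin K → Fin M → ℂ) =>
        U (fun k => sinr mr mt σ2 h 1 p.1 p.2 k)) ''
      {p | pw p.1 + ∑ k, pw (p.2 k) ≤ Pmax}) =
    sSup ((fun p : (Fin M → ℂ) × (Fin K → Fin M → ℂ) =>
        U (fun k => sinr mr mt σ2 h 1 p.1 p.2 k)) ''
      {p | (pw p.1 + ∑ k, pw (p.2 k) ≤ Pmax) ∧ p.1 = 0}) := by
  apply csSup_eq_csSup_of_forall_exists_le
  · rintro x ⟨p, hp, rfl⟩
    refine ⟨U (fun k => sinr mr mt σ2 h 1 0 p.2 k), ⟨(0, p.2), ⟨?_, rfl⟩, rfl⟩, ?_⟩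
    · have hp' : pw p.1 + ∑ k, pw (p.2 k) ≤ Pmax := hp
      have hpw : (0:ℝ) ≤ pw p.1 := Finset.sum_nonneg fun i _ => by positivity
      have h0 : pw (0 : Fin M → ℂ) = 0 := by simp [pw]
      rw [h0]
      linarith
    · exact hU _ _ fun k => sinr_le h mt mr hmt.1 hmr.1 σ2 hσ p.1 p.2 k
  · rintro y ⟨p, hp, rfl⟩
    exact ⟨_, ⟨p, hp.1, rfl⟩, le_refl _⟩
end
end
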